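/- The trace-one operator A = (1/12)(R₀ + 2·SWAP₁₂) on (ℂ²)^⊗3 satisfies the Lieb–Mattis inequality 0 ≤ x+y+z ≤ 3 but violates the Parekh–Thompson inequality (x²+y²+z²) − 2(xy+xz+yz) + 2(x+y+z) ≤ 3, where x, y, z are its expectations on SWAP₁₂, SWAP₁₃, SWAP₂₃. -/

import Mathlib

open Matrix
open scoped ComplexOrder

/-- The permutation operator `T(π)` on `(ℂ^d)^⊗n`. -/
noncomputable def permOp (n d : ℕ) (π : Equiv.Perm (Fin n)) :
    Matrix (Fin n → Fin d) (Fin n → Fin d) ℂ :=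
  Matrix.of fun i j => if i = j ∘ ⇑π.symm then 1 else 0

/-- The swap operator exchanging tensor factors `i` and `j` of `(ℂ²)^⊗n`. -/
noncomputable def swapOp (n : ℕ) (i j : Fin n) :
    Matrix (Fin n → Fin 2) (Fin n → Fin 2) ℂ :=
  permOp n 2 (Equiv.swap i j)

/-- Projector onto the symmetric subspace of three qubits. -/
noncomputable def Rplus : Matrix (Fin 3 → Fin 2) (Fin 3 → Fin 2) ℂ :=
  (1/3 : ℂ) • (swapOp 3 0 1 + swapOp 3 0 2 + swapOp 3 1 2)

/-- Projector onto the `[2,1]` isotypic component of three qubits. -/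
noncomputable def Rzero : Matrix (Fin 3 → Fin 2) (Fin 3 → Fin 2) ℂ :=
  (1/3 : ℂ) • ((3 : ℂ) • (1 : Matrix (Fin 3 → Fin 2) (Fin 3 → Fin 2) ℂ)
    - swapOp 3 0 1 - swapOp 3 0 2 - swapOp 3 1 2)

lemma permOp_mul (n d : ℕ) (σ τ : Equiv.Perm (Fin n)) :
    permOp n d σ * permOp n d τ = permOp n d (σ * τ) := by
  ext i k
  simp only [permOp, Matrix.mul_apply, Matrix.of_apply, mul_ite, mul_one, mul_zero]
  rw [Finset.sum_ite_eq' Finset.univ (k ∘ ⇑τ.symm)]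
  have : (k ∘ ⇑τ.symm) ∘ ⇑σ.symm = k ∘ ⇑(σ * τ).symm := by
    funext x; simp [Equiv.Perm.mul_def]
  simp [this]

lemma permOp_one (n d : ℕ) : permOp n d 1 = 1 := by
  ext i j
  simp [permOp, Matrix.one_apply, eq_comm, Equiv.Perm.one_symm, Equiv.Perm.coe_one]

noncomputable def trP (σ : Equiv.Perm (Fin 3)) : ℂ :=
  ((Finset.univ.filter fun f : Fin 3 → Fin 2 => f = f ∘ ⇑σ.symm).card : ℂ)

lemma trace_permOp (σ : Equiv.Perm (Fin 3)) :
    (permOp 3 2 σ).trace = trP σ := by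
  simp [permOp, trP, Matrix.trace, Matrix.diag, Finset.sum_boole]

lemma key (τ : Equiv.Perm (Fin 3)) :
    Matrix.trace ((1/12 : ℂ) • (Rzero + (2:ℂ) • swapOp 3 0 1) * permOp 3 2 τ) =
    (1/12 : ℂ) * ((1/3) * (3 * trP τ - trP (Equiv.swap 0 1 * τ)
      - trP (Equiv.swap 0 2 * τ) - trP (Equiv.swap 1 2 * τ))
      + 2 * trP (Equiv.swap 0 1 * τ)) := by
  simp only [Rzero, swapOp, Matrix.smul_mul, Matrix.add_mul, Matrix.sub_mul,
    Matrix.one_mul, permOp_mul, Matrix.trace_smul, Matrix.trace_add,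
    Matrix.trace_sub, trace_permOp, one_mul, smul_eq_mul]

lemma keyS (i j : Fin 3) :
    Matrix.trace ((1/12 : ℂ) • (Rzero + (2:ℂ) • swapOp 3 0 1) * swapOp 3 i j) =
    (1/12 : ℂ) * ((1/3) * (3 * trP (Equiv.swap i j)
      - trP (Equiv.swap 0 1 * Equiv.swap i j)
      - trP (Equiv.swap 0 2 * Equiv.swap i j)
      - trP (Equiv.swap 1 2 * Equiv.swap i j))
      + 2 * trP (Equiv.swap 0 1 * Equiv.swap i j)) := key (Equiv.swap i j)

theorem lm_not_pt :
    ∀ A : Matrix (Fin 3 → Fin 2) (Fin 3 → Fin 2) ℂ,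
      A = (1/12 : ℂ) • (Rzero + (2 : ℂ) • swapOp 3 0 1) →
      A.trace = 1 ∧
      ∀ x y z : ℝ,
        x = (Matrix.trace (A * swapOp 3 0 1)).re →
        y = (Matrix.trace (A * swapOp 3 0 2)).re →
        z = (Matrix.trace (A * swapOp 3 1 2)).re →
        (0 ≤ x + y + z ∧ x + y + z ≤ 3) ∧
        ¬ ((x ^ 2 + y ^ 2 + z ^ 2) - 2 * (x * y + x * z + y * z)
            + 2 * (x + y + z) ≤ 3) := by
  intro A hA
  have hAtr : A.trace = 1 := by
    have := key 1
    simp only [mul_one, permOp_one, Matrix.mul_one] at this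
    rw [hA, this]
    have h1 : trP 1 = 8 := by rw [trP]; norm_cast
    have h2 : trP (Equiv.swap 0 1) = 4 := by rw [trP]; norm_cast
    have h3 : trP (Equiv.swap 0 2) = 4 := by rw [trP]; norm_cast
    have h4 : trP (Equiv.swap 1 2) = 4 := by rw [trP]; norm_cast
    rw [h1, h2, h3, h4]; norm_num
  refine ⟨hAtr, ?_⟩
  intro x y z hx hy hz
  have ex : Matrix.trace (A * swapOp 3 0 1) = ((4/3 : ℝ) : ℂ) := by
    rw [hA, keyS]
    have h1 : trP (Equiv.swap 0 1) = 4 := by rw [trP]; norm_cast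
    have h2 : trP (Equiv.swap 0 1 * Equiv.swap 0 1) = 8 := by rw [trP]; norm_cast
    have h3 : trP (Equiv.swap 0 2 * Equiv.swap 0 1) = 2 := by rw [trP]; norm_cast
    have h4 : trP (Equiv.swap 1 2 * Equiv.swap 0 1) = 2 := by rw [trP]; norm_cast
    rw [h1, h2, h3, h4]; norm_num
  have ey : Matrix.trace (A * swapOp 3 0 2) = ((1/3 : ℝ) : ℂ) := by
    rw [hA, keyS]
    have h1 : trP (Equiv.swap 0 2) = 4 := by rw [trP]; norm_cast
    have h2 : trP (Equiv.swap 0 1 * Equiv.swap 0 2) = 2 := by rw [trP]; norm_cast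
    have h3 : trP (Equiv.swap 0 2 * Equiv.swap 0 2) = 8 := by rw [trP]; norm_cast
    have h4 : trP (Equiv.swap 1 2 * Equiv.swap 0 2) = 2 := by rw [trP]; norm_cast
    rw [h1, h2, h3, h4]; norm_num
  have ez : Matrix.trace (A * swapOp 3 1 2) = ((1/3 : ℝ) : ℂ) := by
    rw [hA, keyS]
    have h1 : trP (Equiv.swap 1 2) = 4 := by rw [trP]; norm_cast
    have h2 : trP (Equiv.swap 0 1 * Equiv.swap 1 2) = 2 := by rw [trP]; norm_cast
    have h3 : trP (Equiv.swap 0 2 * Equiv.swap 1 2) = 2 := by rw [trP]; norm_cast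
    have h4 : trP (Equiv.swap 1 2 * Equiv.swap 1 2) = 8 := by rw [trP]; norm_cast
    rw [h1, h2, h3, h4]; norm_num
  rw [ex, Complex.ofReal_re] at hx
  rw [ey, Complex.ofReal_re] at hy
  rw [ez, Complex.ofReal_re] at hz
  subst hx hy hz
  norm_num
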